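/- Let K be any field. Under the natural action of the Schur algebra S_K(2m,n) on V^{⊗n}, the subalgebra S_K^s(m,n) is mapped isomorphically onto End_{B_n(−2m)}(V^{⊗n}), the algebra of all K-linear endomorphisms of V^{⊗n} commuting with the right action of the Brauer algebra B_n(−2m). -/

import Mathlib

open scoped BigOperators Classical
open MulOpposite

noncomputable section

namespace SpBrauer

/-- the conjugate index `i' = 2m-1-i` (0-based version of `2m+1-i`). -/
def conjIdx (m : ℕ) (i : Fin (2*m)) : Fin (2*m) :=
  ⟨2*m - 1 - (i : ℕ), by have := i.isLt; omega⟩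

/-- the sign `ε_{ij}`. -/
def epsZ (m : ℕ) (i j : Fin (2*m)) : ℤ :=
  if (i : ℕ) + (j : ℕ) + 1 = 2*m then (if (i : ℕ) < (j : ℕ) then 1 else -1) else 0

/-- tensor space `V^{⊗ n}` modelled as the free module on multi-indices. -/
abbrev Ten (R : Type) (m n : ℕ) : Type := (Fin n → Fin (2*m)) → R

/-- basis tensor `v_{i_1} ⊗ ⋯ ⊗ v_{i_n}`. -/
def dta (R : Type) [CommRing R] (m n : ℕ) (i : Fin n → Fin (2*m)) : Ten R m n :=
  fun a => if a = i then 1 else 0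

/-- the linear map on free modules with "matrix" `M`. -/
def funMap (R : Type) [CommRing R] (α β : Type) [Fintype α]
    (M : β → α → R) : (α → R) →ₗ[R] (β → R) where
  toFun f := fun b => ∑ a, M b a * f a
  map_add' f g := by
    funext b
    simp [Pi.add_apply, mul_add, Finset.sum_add_distrib]
  map_smul' c f := by
    funext b
    simp only [Pi.smul_apply, smul_eq_mul, RingHom.id_apply]
    rw [Finset.mul_sum]
    exact Finset.sum_congr rfl (fun a _ => by ring)

/-- the operator given by the right action of the Brauer algebra generator `s_j`
(`j` is 0-based: `s_j` swaps positions `j` and `j+1` with a sign). -/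
def sOp (R : Type) [CommRing R] (m n : ℕ) (j : Fin (n-1)) :
    Ten R m n →ₗ[R] Ten R m n :=
  funMap R _ _ (fun a b =>
    if b = a ∘ (Equiv.swap (⟨(j:ℕ), by have := j.isLt; omega⟩ : Fin n)
        (⟨(j:ℕ)+1, by have := j.isLt; omega⟩ : Fin n)) then -1 else 0)

/-- the operator given by the right action of the Brauer algebra generator `e_j`. -/
def eOp (R : Type) [CommRing R] (m n : ℕ) (j : Fin (n-1)) :
    Ten R m n →ₗ[R] Ten R m n :=
  funMap R _ _ (fun a b =>
    (if ∀ p : Fin n, p ≠ (⟨(j:ℕ), by have := j.isLt; omega⟩ : Fin n) →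
        p ≠ (⟨(j:ℕ)+1, by have := j.isLt; omega⟩ : Fin n) → b p = a p then 1 else 0) *
    (-((epsZ m (a ⟨(j:ℕ), by have := j.isLt; omega⟩) (a ⟨(j:ℕ)+1, by have := j.isLt; omega⟩) : ℤ) : R)) *
    ((epsZ m (b ⟨(j:ℕ), by have := j.isLt; omega⟩) (b ⟨(j:ℕ)+1, by have := j.isLt; omega⟩) : ℤ) : R))

/-- the (sign-twisted) right place-permutation action of a permutation on tensor space. -/
def permOp (R : Type) [CommRing R] (m n : ℕ) (π : Equiv.Perm (Fin n)) :
    Ten R m n →ₗ[R] Ten R m n :=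
  funMap R _ _ (fun a b => if b = a ∘ π then ((Equiv.Perm.sign π : ℤ) : R) else 0)

/-- the `n`-fold tensor power of (the endomorphism of `V` given by) a matrix `g`,
acting diagonally on tensor space. -/
def tenOp (R : Type) [CommRing R] (m n : ℕ) (g : Matrix (Fin (2*m)) (Fin (2*m)) R) :
    Ten R m n →ₗ[R] Ten R m n :=
  funMap R _ _ (fun a b => ∏ k : Fin n, g (a k) (b k))

/-- the skew-symmetric bilinear form `(v,w)` determined by `(v_i, v_j) = ε_{ij}`. -/
def sform (R : Type) [CommRing R] (m : ℕ) (v w : Fin (2*m) → R) : R :=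
  ∑ i, ∑ j, v i * ((epsZ m i j : ℤ) : R) * w j

/-- membership in the symplectic group `Sp(V)` (an invertible linear map preserving the form). -/
def IsSymp (R : Type) [CommRing R] (m : ℕ) (g : Matrix (Fin (2*m)) (Fin (2*m)) R) : Prop :=
  IsUnit g.det ∧ ∀ v w, sform R m (g.mulVec v) (g.mulVec w) = sform R m v w

/-- membership in the symplectic similitude group `GSp(V)`. -/
def IsGSymp (R : Type) [CommRing R] (m : ℕ) (g : Matrix (Fin (2*m)) (Fin (2*m)) R) : Prop :=
  IsUnit g.det ∧ ∃ d : R, d ≠ 0 ∧ ∀ v w, sform R m (g.mulVec v) (g.mulVec w) = d * sform R m v w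

/-! ### The Brauer algebra, by generators and relations -/

/-- generators of the Brauer algebra `B_n(x)`:  `s i` and `e i` for `i = 0, …, n-2`
(0-based versions of `s_1, …, s_{n-1}`, `e_1, …, e_{n-1}`). -/
inductive BGen (n : ℕ) : Type
  | s : Fin (n-1) → BGen n
  | e : Fin (n-1) → BGen n

/-- the defining relations of the Brauer algebra `B_n(x)`. -/
inductive BRel (R : Type) [CommRing R] (x : R) (n : ℕ) :
    FreeAlgebra R (BGen n) → FreeAlgebra R (BGen n) → Prop
  | ss (i : Fin (n-1)) :
      BRel R x n (FreeAlgebra.ι R (BGen.s i) * FreeAlgebra.ι R (BGen.s i)) 1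
  | ee (i : Fin (n-1)) :
      BRel R x n (FreeAlgebra.ι R (BGen.e i) * FreeAlgebra.ι R (BGen.e i))
        (x • FreeAlgebra.ι R (BGen.e i))
  | es (i : Fin (n-1)) :
      BRel R x n (FreeAlgebra.ι R (BGen.e i) * FreeAlgebra.ι R (BGen.s i))
        (FreeAlgebra.ι R (BGen.e i))
  | se (i : Fin (n-1)) :
      BRel R x n (FreeAlgebra.ι R (BGen.s i) * FreeAlgebra.ι R (BGen.e i))
        (FreeAlgebra.ι R (BGen.e i))
  | ssComm (i j : Fin (n-1)) (h : (i:ℕ)+1 < (j:ℕ)) :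
      BRel R x n (FreeAlgebra.ι R (BGen.s i) * FreeAlgebra.ι R (BGen.s j))
        (FreeAlgebra.ι R (BGen.s j) * FreeAlgebra.ι R (BGen.s i))
  | seComm (i j : Fin (n-1)) (h : (i:ℕ)+1 < (j:ℕ)) :
      BRel R x n (FreeAlgebra.ι R (BGen.s i) * FreeAlgebra.ι R (BGen.e j))
        (FreeAlgebra.ι R (BGen.e j) * FreeAlgebra.ι R (BGen.s i))
  | eeComm (i j : Fin (n-1)) (h : (i:ℕ)+1 < (j:ℕ)) :
      BRel R x n (FreeAlgebra.ι R (BGen.e i) * FreeAlgebra.ι R (BGen.e j))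
        (FreeAlgebra.ι R (BGen.e j) * FreeAlgebra.ι R (BGen.e i))
  | braid (i j : Fin (n-1)) (h : (j:ℕ) = (i:ℕ)+1) :
      BRel R x n
        (FreeAlgebra.ι R (BGen.s i) * FreeAlgebra.ι R (BGen.s j) * FreeAlgebra.ι R (BGen.s i))
        (FreeAlgebra.ι R (BGen.s j) * FreeAlgebra.ι R (BGen.s i) * FreeAlgebra.ι R (BGen.s j))
  | eje (i j : Fin (n-1)) (h : (j:ℕ) = (i:ℕ)+1) :
      BRel R x n
        (FreeAlgebra.ι R (BGen.e i) * FreeAlgebra.ι R (BGen.e j) * FreeAlgebra.ι R (BGen.e i))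
        (FreeAlgebra.ι R (BGen.e i))
  | eje' (i j : Fin (n-1)) (h : (j:ℕ) = (i:ℕ)+1) :
      BRel R x n
        (FreeAlgebra.ι R (BGen.e j) * FreeAlgebra.ι R (BGen.e i) * FreeAlgebra.ι R (BGen.e j))
        (FreeAlgebra.ι R (BGen.e j))
  | see (i j : Fin (n-1)) (h : (j:ℕ) = (i:ℕ)+1) :
      BRel R x n
        (FreeAlgebra.ι R (BGen.s i) * FreeAlgebra.ι R (BGen.e j) * FreeAlgebra.ι R (BGen.e i))
        (FreeAlgebra.ι R (BGen.s j) * FreeAlgebra.ι R (BGen.e i))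
  | ees (i j : Fin (n-1)) (h : (j:ℕ) = (i:ℕ)+1) :
      BRel R x n
        (FreeAlgebra.ι R (BGen.e j) * FreeAlgebra.ι R (BGen.e i) * FreeAlgebra.ι R (BGen.s j))
        (FreeAlgebra.ι R (BGen.e j) * FreeAlgebra.ι R (BGen.s i))

/-- the Brauer algebra `B_n(x)` over `R`, presented by generators and relations. -/
abbrev BrauerAlg (R : Type) [CommRing R] (x : R) (n : ℕ) : Type := RingQuot (BRel R x n)

/-- the generator `s_i` of the Brauer algebra (0-based index). -/
def bS (R : Type) [CommRing R] (x : R) (n : ℕ) (i : Fin (n-1)) : BrauerAlg R x n :=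
  RingQuot.mkAlgHom R (BRel R x n) (FreeAlgebra.ι R (BGen.s i))

/-- the generator `e_i` of the Brauer algebra (0-based index). -/
def bE (R : Type) [CommRing R] (x : R) (n : ℕ) (i : Fin (n-1)) : BrauerAlg R x n :=
  RingQuot.mkAlgHom R (BRel R x n) (FreeAlgebra.ι R (BGen.e i))

/-- the element `E_f = e_1 e_3 ⋯ e_{2f-1}` of the Brauer algebra. -/
def EfB (R : Type) [CommRing R] (x : R) (n f : ℕ) (hf : 2*f ≤ n) : BrauerAlg R x n :=
  (List.ofFn (fun i : Fin f => bE R x n ⟨2*(i:ℕ), by have := i.isLt; omega⟩)).prod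

/-- the two-sided ideal `B^{(f)}` of the Brauer algebra generated by `E_f`
(it is `0` when `2f > n`, matching the convention of the paper). -/
def Bideal (R : Type) [CommRing R] (x : R) (n f : ℕ) : Submodule R (BrauerAlg R x n) :=
  Submodule.span R {y | ∃ (hf : 2*f ≤ n) (a b : BrauerAlg R x n), y = a * EfB R x n f hf * b}

/-- the operator on tensor space given by the right action of `E_f = e_1e_3⋯e_{2f-1}`. -/
def EfOp (R : Type) [CommRing R] (m n f : ℕ) (hf : 2*f ≤ n) :
    Module.End R (Ten R m n) :=
  (List.ofFn (fun i : Fin f => eOp R m n ⟨2*(i:ℕ), by have := i.isLt; omega⟩)).prod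

/-! ### Combinatorial predicates -/

/-- `σ ∈ S_{{2f+1, …, n}}`, i.e. `σ` fixes `1, …, 2f` pointwise (0-based). -/
def FixLow (n f : ℕ) (σ : Equiv.Perm (Fin n)) : Prop :=
  ∀ a : Fin n, (a:ℕ) < 2*f → σ a = a

/-- `σ ∈ S_{2f} = S_{{1, …, 2f}}`, i.e. `σ` fixes `2f+1, …, n` pointwise (0-based). -/
def FixHigh (n f : ℕ) (σ : Equiv.Perm (Fin n)) : Prop :=
  ∀ a : Fin n, 2*f ≤ (a:ℕ) → σ a = a

/-- membership in `D_{ν_f}`:  the bitableau `t^{ν_f}·d` is row standard and the first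
column of its first component is increasing (everything 0-based; `d a` is the entry
at the cell of `t^{ν_f}` containing `a`). -/
def DnuP (n f : ℕ) (d : Equiv.Perm (Fin n)) : Prop :=
  (∀ a b : Fin n, (a:ℕ) % 2 = 0 → (b:ℕ) = (a:ℕ)+1 → (b:ℕ) < 2*f → d a < d b) ∧
  (∀ a b : Fin n, (a:ℕ) % 2 = 0 → (b:ℕ) % 2 = 0 → (a:ℕ) < (b:ℕ) → (b:ℕ) < 2*f → d a < d b) ∧
  (∀ a b : Fin n, 2*f ≤ (a:ℕ) → (b:ℕ) = (a:ℕ)+1 → d a < d b)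

/-- membership in `D_f = D_{ν_f} ∩ S_{2f}`. -/
def DfP (n f : ℕ) (d : Equiv.Perm (Fin n)) : Prop :=
  DnuP n f d ∧ FixHigh n f d

/-- membership in the row stabilizer `S_{(2^f)}` of the initial `(2^f)`-tableau
(whose rows are `{1,2}, {3,4}, …, {2f-1,2f}`), inside `S_{2f} ≤ S_n`. -/
def RowStabP (n f : ℕ) (w : Equiv.Perm (Fin n)) : Prop :=
  FixHigh n f w ∧ ∀ a : Fin n, ((w a : ℕ))/2 = (a:ℕ)/2

/-- membership in `Ψ`, the normalizer of `S_{(2^f)}` in `S_{2f}`. -/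
def PsiP (n f : ℕ) (z : Equiv.Perm (Fin n)) : Prop :=
  FixHigh n f z ∧ ∀ w, RowStabP n f w ↔ RowStabP n f (z * w * z⁻¹)

/-- `d_J` for a `2f`-element subset `J ⊆ {1, …, n}`:  the unique permutation
enumerating `J` increasingly on the first `2f` positions and the complement of `J`
increasingly on the remaining positions. -/
def IsdJ (n f : ℕ) (J : Finset (Fin n)) (d : Equiv.Perm (Fin n)) : Prop :=
  (∀ a : Fin n, ((a:ℕ) < 2*f → d a ∈ J) ∧ (2*f ≤ (a:ℕ) → d a ∉ J)) ∧
  (∀ a b : Fin n, (a:ℕ) < (b:ℕ) → (b:ℕ) < 2*f → d a < d b) ∧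
  (∀ a b : Fin n, 2*f ≤ (a:ℕ) → (a:ℕ) < (b:ℕ) → d a < d b)

/-- membership in `S_{(2f, n-2f)} = S_{{1,…,2f}} × S_{{2f+1,…,n}}`. -/
def BlockP (n f : ℕ) (d : Equiv.Perm (Fin n)) : Prop :=
  ∀ a : Fin n, (a:ℕ) < 2*f ↔ ((d a : ℕ)) < 2*f

/-- the multi-index `c = (1, 1', 2, 2', …, f, f')`, completed by an
arbitrary multi-index `kk` on the positions `> 2f`. -/
def cIdx (m n f : ℕ) (hfm : f ≤ m) (kk : Fin n → Fin (2*m)) : Fin n → Fin (2*m) :=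
  fun p => if h : (p:ℕ) < 2*f then
    (if (p:ℕ) % 2 = 0 then (⟨(p:ℕ)/2, by omega⟩ : Fin (2*m))
     else conjIdx m ⟨(p:ℕ)/2, by omega⟩)
  else kk p

/-- the multi-index `ĉ = (f+1, (f+1)', …, 2f, (2f)') ∈ I(2m, 2f)`. -/
def cHatIdx (m f : ℕ) (hfm : 2*f ≤ m) : Fin (2*f) → Fin (2*m) :=
  fun p => if (p:ℕ) % 2 = 0 then (⟨f + (p:ℕ)/2, by have := p.isLt; omega⟩ : Fin (2*m))
           else conjIdx m ⟨f + (p:ℕ)/2, by have := p.isLt; omega⟩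

/-- membership in `I_f` (only the values at positions `> 2f` matter):
`2f+1 ≤ kk p ≤ m` (1-based) for all positions `p > 2f`. -/
def IfP (m n f : ℕ) (kk : Fin n → Fin (2*m)) : Prop :=
  ∀ p : Fin n, 2*f ≤ (p:ℕ) → 2*f ≤ ((kk p : ℕ)) ∧ ((kk p : ℕ)) < m

/-- the weight of a multi-index. -/
def wtOf (m k : ℕ) (a : Fin k → Fin (2*m)) : Fin (2*m) → ℕ :=
  fun j => (Finset.univ.filter (fun p => a p = j)).card

/-- the weight-`μ` component of an element of tensor space. -/
def wcomp (R : Type) [CommRing R] (m k : ℕ) (μ : Fin (2*m) → ℕ) (w : Ten R m k) :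
    Ten R m k :=
  fun a => if wtOf m k a = μ then w a else 0

/-- partial sums of a partition. -/
def psum (l : ℕ → ℕ) (r : ℕ) : ℕ := ∑ i ∈ Finset.range r, l i

/-- `l` represents a partition of `n - 2f` (parts listed weakly decreasingly). -/
def PartP (n f : ℕ) (l : ℕ → ℕ) : Prop :=
  (∀ i, l (i+1) ≤ l i) ∧ psum l n = n - 2*f ∧ ∀ i, n ≤ i → l i = 0

/-- membership in the Young subgroup `S_λ ≤ S_{{2f+1, …, n}}` stabilizing the rows of
the initial `λ`-tableau `t^λ` (with entries `2f+1, …, n`). -/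
def InSlam (n f : ℕ) (l : ℕ → ℕ) (w : Equiv.Perm (Fin n)) : Prop :=
  (∀ a : Fin n, (a:ℕ) < 2*f → w a = a) ∧
  (∀ (a : Fin n) (r : ℕ), 2*f + psum l r ≤ (a:ℕ) → (a:ℕ) < 2*f + psum l (r+1) →
     2*f + psum l r ≤ ((w a : ℕ)) ∧ ((w a : ℕ)) < 2*f + psum l (r+1))

/-- `d = d(t)` for a standard `λ`-tableau `t` with entries `2f+1, …, n`, i.e.
`d ∈ S_{{2f+1,…,n}}` and `t^λ · d` is standard. -/
def StdP (n f : ℕ) (l : ℕ → ℕ) (d : Equiv.Perm (Fin n)) : Prop :=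
  FixLow n f d ∧
  (∀ (a b : Fin n) (r c : ℕ), (a:ℕ) = 2*f + psum l r + c → c+1 < l r →
     (b:ℕ) = (a:ℕ)+1 → d a < d b) ∧
  (∀ (a b : Fin n) (r c : ℕ), (a:ℕ) = 2*f + psum l r + c → c < l (r+1) →
     (b:ℕ) = 2*f + psum l (r+1) + c → d a < d b)

/-- the embedding of the index set of the basis of `V` into that of `Ṽ`
(`v_i ↦ ṽ_i`, `v_{i'} ↦ ṽ_{i'}`). -/
def embIdx (m m0 : ℕ) (h : m ≤ m0) : Fin (2*m) → Fin (2*m0) :=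
  fun j => if (j:ℕ) < m then ⟨(j:ℕ), by have := j.isLt; omega⟩
           else ⟨(j:ℕ) + 2*(m0 - m), by have := j.isLt; omega⟩

/-- the inclusion `V^{⊗n} ↪ Ṽ^{⊗n}`. -/
def inclT (R : Type) [CommRing R] (m m0 n : ℕ) (h : m ≤ m0) :
    Ten R m n →ₗ[R] Ten R m0 n :=
  funMap R _ _ (fun (b : Fin n → Fin (2*m0)) (a : Fin n → Fin (2*m)) =>
    if b = embIdx m m0 h ∘ a then 1 else 0)

/-- the projection `π_K : Ṽ^{⊗n} ↠ V^{⊗n}` killing all basis tensors containing a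
factor `ṽ_i` or `ṽ_{i'}` with `m+1 ≤ i ≤ m_0`. -/
def projT (R : Type) [CommRing R] (m m0 n : ℕ) (h : m ≤ m0) :
    Ten R m0 n →ₗ[R] Ten R m n :=
  funMap R _ _ (fun (a : Fin n → Fin (2*m)) (b : Fin n → Fin (2*m0)) =>
    if b = embIdx m m0 h ∘ a then 1 else 0)


/-- replace the values of a multi-index at the two positions `p`, `q` by `x`, `y`. -/
def set2 (m n : ℕ) (p q : Fin n) (x y : Fin (2*m)) (t : Fin n → Fin (2*m)) :
    Fin n → Fin (2*m) :=
  fun r => if r = p then x else if r = q then y else t r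

/-! ### auxiliary lemmas -/

section Aux

variable {m n : ℕ}

lemma conj_conj (i : Fin (2*m)) : conjIdx m (conjIdx m i) = i := by
  have := i.isLt; apply Fin.ext; simp only [conjIdx]; omega

lemma conj_val (i : Fin (2*m)) : ((conjIdx m i : Fin (2*m)) : ℕ) = 2*m - 1 - (i:ℕ) := rfl

lemma epsZ_eq_zero_of_ne (i j : Fin (2*m)) (h : j ≠ conjIdx m i) : epsZ m i j = 0 := by
  have hi := i.isLt; have hj := j.isLt
  have hne : (i:ℕ) + (j:ℕ) + 1 ≠ 2*m := by
    intro hc; exact h (Fin.ext (by simp only [conj_val]; omega))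
  simp [epsZ, hne]

lemma epsZ_conj (i : Fin (2*m)) :
    epsZ m i (conjIdx m i) = if (i:ℕ) < m then 1 else -1 := by
  have hi := i.isLt
  simp only [epsZ, conj_val]
  split_ifs <;> omega

lemma epsZ_antisymm (i j : Fin (2*m)) : epsZ m j i = - epsZ m i j := by
  have hi := i.isLt; have hj := j.isLt
  unfold epsZ
  by_cases h : (i:ℕ)+(j:ℕ)+1 = 2*m
  · rw [if_pos (by omega), if_pos h]
    have hne : (i:ℕ) ≠ (j:ℕ) := by omega
    rcases lt_or_gt_of_ne hne with hl | hl
    · rw [if_neg (by omega), if_pos hl]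
    · rw [if_pos hl, if_neg (by omega)]; ring
  · rw [if_neg (by omega), if_neg h]; ring

lemma epsZ_conj_conj (k : Fin (2*m)) :
    epsZ m (conjIdx m k) (conjIdx m (conjIdx m k)) = - epsZ m k (conjIdx m k) := by
  rw [conj_conj]; exact epsZ_antisymm k (conjIdx m k)

lemma conj_lt_of_not_lt (i : Fin (2*m)) (h : ¬ ((i:ℕ) < m)) :
    ((conjIdx m i : Fin (2*m)) : ℕ) < m := by
  have := i.isLt; rw [conj_val]; omega

lemma ne_conj_symm {i j : Fin (2*m)} (h : i ≠ conjIdx m j) : j ≠ conjIdx m i := by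
  intro hc; exact h (by rw [hc, conj_conj])

def conjEquiv (m : ℕ) : Equiv (Fin (2*m)) (Fin (2*m)) :=
  ⟨conjIdx m, conjIdx m, fun i => conj_conj i, fun i => conj_conj i⟩

section Set2
variable {p q : Fin n}

lemma set2_fst (x y : Fin (2*m)) (t : Fin n → Fin (2*m)) : set2 m n p q x y t p = x := by
  simp [set2]

lemma set2_snd (hpq : p ≠ q) (x y : Fin (2*m)) (t : Fin n → Fin (2*m)) :
    set2 m n p q x y t q = y := by
  simp [set2, Ne.symm hpq]

lemma set2_other (x y : Fin (2*m)) (t : Fin n → Fin (2*m)) {r : Fin n}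
    (h1 : r ≠ p) (h2 : r ≠ q) : set2 m n p q x y t r = t r := by
  simp [set2, h1, h2]

lemma set2_set2 (x y x' y' : Fin (2*m)) (t : Fin n → Fin (2*m)) :
    set2 m n p q x y (set2 m n p q x' y' t) = set2 m n p q x y t := by
  funext r; unfold set2; split_ifs <;> rfl

lemma set2_self (t : Fin n → Fin (2*m)) : set2 m n p q (t p) (t q) t = t := by
  funext r; unfold set2
  split_ifs with h1 h2
  · rw [h1]
  · rw [h2]
  · rfl

lemma set2_congr (x y : Fin (2*m)) {s t : Fin n → Fin (2*m)}
    (h : ∀ r, r ≠ p → r ≠ q → s r = t r) :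
    set2 m n p q x y s = set2 m n p q x y t := by
  funext r; unfold set2
  split_ifs with h1 h2
  · rfl
  · rfl
  · exact h r h1 h2

lemma comp_set2 (σ : Equiv.Perm (Fin n)) {p0 q0 : Fin n} (hp : σ p0 = p) (hq : σ q0 = q)
    (x y : Fin (2*m)) (t : Fin n → Fin (2*m)) :
    (set2 m n p q x y t) ∘ σ = set2 m n p0 q0 x y (t ∘ σ) := by
  funext r
  simp only [Function.comp_apply]
  by_cases h1 : r = p0
  · subst h1; rw [hp, set2_fst, set2_fst]
  · have hσ1 : σ r ≠ p := by rw [← hp]; exact fun hh => h1 (σ.injective hh)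
    by_cases h2 : r = q0
    · subst h2
      have hpq : p ≠ q := fun hc => h1 (σ.injective (hp.trans (hc.trans hq.symm))).symm
      rw [hq, set2_snd hpq, set2_snd (fun hc => h1 hc.symm)]
    · have hσ2 : σ r ≠ q := by rw [← hq]; exact fun hh => h2 (σ.injective hh)
      rw [set2_other x y t hσ1 hσ2, set2_other x y (t ∘ σ) h1 h2]
      rfl

lemma set2_comm (hpq : p ≠ q) (x y : Fin (2*m)) (t : Fin n → Fin (2*m)) :
    set2 m n q p x y t = set2 m n p q y x t := by
  funext r; unfold set2
  by_cases h1 : r = q <;> by_cases h2 : r = p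
  · exact absurd (h2.symm.trans h1) hpq
  all_goals simp [h1, h2, hpq, Ne.symm hpq]

lemma comp_swap (hpq : p ≠ q) (x y : Fin (2*m)) (t : Fin n → Fin (2*m)) :
    (set2 m n p q x y t) ∘ (Equiv.swap p q) = set2 m n p q y x t := by
  rw [comp_set2 (Equiv.swap p q) (Equiv.swap_apply_right p q) (Equiv.swap_apply_left p q)]
  rw [set2_comm hpq]
  exact set2_congr y x (fun r h1 h2 => by
    simp [Equiv.swap_apply_of_ne_of_ne h1 h2])

end Set2

end Aux

section FunMapAux

variable {K : Type} [Field K] {m n : ℕ}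

lemma funMap_apply {α β : Type} [Fintype α] (M : β → α → K) (f : α → K) (b : β) :
    funMap K α β M f b = ∑ a, M b a * f a := rfl

lemma funMap_mul {α : Type} [Fintype α] (M N : α → α → K) :
    (funMap K α α M) * (funMap K α α N) = funMap K α α (fun b c => ∑ a, M b a * N a c) := by
  apply LinearMap.ext; intro f; funext b
  rw [Module.End.mul_apply, funMap_apply, funMap_apply]
  simp only [funMap_apply, Finset.mul_sum, Finset.sum_mul]
  rw [Finset.sum_comm]
  exact Finset.sum_congr rfl fun c _ => Finset.sum_congr rfl fun a _ => by ring

lemma funMap_dta {α : Type} [Fintype α] [DecidableEq α] (M : α → α → K) (c : α) (b : α) :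
    funMap K α α M (fun a => if a = c then (1:K) else 0) b = M b c := by
  rw [funMap_apply]
  simp [mul_ite, Finset.sum_ite_eq']

lemma funMap_inj {α : Type} [Fintype α] [DecidableEq α] (M N : α → α → K)
    (h : funMap K α α M = funMap K α α N) : M = N := by
  funext b c
  have h2 : funMap K α α M (fun a => if a = c then (1:K) else 0) b
      = funMap K α α N (fun a => if a = c then (1:K) else 0) b := by rw [h]
  rwa [funMap_dta, funMap_dta] at h2

lemma end_eq_funMap (F : Module.End K (Ten K m n)) :
    F = funMap K _ _ (fun b a => F (dta K m n a) b) := by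
  apply LinearMap.ext; intro f; funext b
  have hf : f = ∑ a, f a • dta K m n a := by
    funext u
    rw [Finset.sum_apply]
    simp [dta, Finset.sum_ite_eq]
  conv_lhs => rw [hf]
  rw [map_sum, Finset.sum_apply, funMap_apply]
  exact Finset.sum_congr rfl fun a _ => by
    rw [LinearMap.map_smul]; simp [mul_comm]

lemma sum_agree {p q : Fin n} (hpq : p ≠ q) (t : Fin n → Fin (2*m))
    (P : (Fin n → Fin (2*m)) → Prop) [inst : ∀ a, Decidable (P a)]
    (hP : ∀ a, P a ↔ ∀ r, r ≠ p → r ≠ q → a r = t r)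
    (g : (Fin n → Fin (2*m)) → K) :
    ∑ a : Fin n → Fin (2*m), (if P a then g a else 0)
      = ∑ x : Fin (2*m), ∑ y : Fin (2*m), g (set2 m n p q x y t) := by
  rw [← Finset.sum_filter]
  have key := Fintype.sum_prod_type
    (f := fun xy : Fin (2*m) × Fin (2*m) => g (set2 m n p q xy.1 xy.2 t))
  dsimp only at key
  rw [← key]
  apply Finset.sum_nbij' (fun a => ((a p, a q) : Fin (2*m) × Fin (2*m)))
    (fun xy => set2 m n p q xy.1 xy.2 t)
  · intro a _; exact Finset.mem_univ _
  · intro xy _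
    rw [Finset.mem_filter]
    refine ⟨Finset.mem_univ _, ?_⟩
    rw [hP]
    intro r h1 h2; exact set2_other _ _ _ h1 h2
  · intro a ha
    rw [Finset.mem_filter, hP] at ha
    funext r
    by_cases h1 : r = p
    · subst h1; exact set2_fst _ _ _
    · by_cases h2 : r = q
      · subst h2; exact set2_snd hpq _ _ _
      · rw [set2_other _ _ _ h1 h2, ha.2 r h1 h2]
  · rintro ⟨x, y⟩ _
    dsimp only
    rw [set2_fst, set2_snd hpq]
  · intro a ha
    rw [Finset.mem_filter, hP] at ha
    congr 1
    funext r
    by_cases h1 : r = p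
    · subst h1; exact (set2_fst _ _ _).symm
    · by_cases h2 : r = q
      · subst h2; exact (set2_snd hpq _ _ _).symm
      · rw [set2_other _ _ _ h1 h2, ha.2 r h1 h2]

lemma sum_eps (x : Fin (2*m)) (h : Fin (2*m) → K) :
    ∑ y, ((epsZ m x y : ℤ) : K) * h y
      = ((epsZ m x (conjIdx m x) : ℤ) : K) * h (conjIdx m x) := by
  apply Finset.sum_eq_single
  · intro y _ hy
    rw [epsZ_eq_zero_of_ne x y hy]; simp
  · intro hmem; exact absurd (Finset.mem_univ _) hmem

end FunMapAux

section CommIff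

variable {K : Type} [Field K] {m n : ℕ}

lemma comp_swap_swap {α : Type} (p q : Fin n) (a : Fin n → α) :
    (a ∘ (Equiv.swap p q)) ∘ (Equiv.swap p q) = a := by
  funext r; simp [Function.comp_apply, Equiv.swap_apply_self]

lemma sMat_comm_iff (c : (Fin n → Fin (2*m)) → (Fin n → Fin (2*m)) → K) (p q : Fin n) :
    (funMap K _ _ (fun u a => c a u)
        * funMap K _ _ (fun a b => if b = a ∘ (Equiv.swap p q) then (-1:K) else 0)
      = funMap K _ _ (fun a b => if b = a ∘ (Equiv.swap p q) then (-1:K) else 0)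
        * funMap K _ _ (fun u a => c a u))
    ↔ ∀ a b : Fin n → Fin (2*m),
        c (a ∘ (Equiv.swap p q)) (b ∘ (Equiv.swap p q)) = c a b := by
  set τ := Equiv.swap p q with hτdef
  have hinv : ∀ a : Fin n → Fin (2*m), (a ∘ τ) ∘ τ = a := comp_swap_swap p q
  rw [funMap_mul, funMap_mul]
  have hL : ∀ u b : Fin n → Fin (2*m),
      (∑ a, c a u * (if b = a ∘ τ then (-1:K) else 0)) = - c (b ∘ τ) u := by
    intro u b
    have step : ∀ a : Fin n → Fin (2*m),
        c a u * (if b = a ∘ τ then (-1:K) else 0) = (if a = b ∘ τ then - c a u else 0) := by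
      intro a
      by_cases hc : a = b ∘ τ
      · rw [if_pos hc, if_pos (by rw [hc, hinv]), mul_neg_one]
      · rw [if_neg hc, if_neg (fun hb : b = a ∘ τ => hc (by rw [hb, hinv])), mul_zero]
    rw [Finset.sum_congr rfl (fun a _ => step a), Finset.sum_ite_eq' Finset.univ (b ∘ τ)
      (fun a => - c a u), if_pos (Finset.mem_univ _)]
  have hR : ∀ u b : Fin n → Fin (2*m),
      (∑ a, (if a = u ∘ τ then (-1:K) else 0) * c b a) = - c b (u ∘ τ) := by
    intro u b
    have step : ∀ a : Fin n → Fin (2*m),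
        (if a = u ∘ τ then (-1:K) else 0) * c b a = (if a = u ∘ τ then - c b a else 0) := by
      intro a
      by_cases hc : a = u ∘ τ
      · rw [if_pos hc, if_pos hc, neg_one_mul]
      · rw [if_neg hc, if_neg hc, zero_mul]
    rw [Finset.sum_congr rfl (fun a _ => step a), Finset.sum_ite_eq' Finset.univ (u ∘ τ)
      (fun a => - c b a), if_pos (Finset.mem_univ _)]
  constructor
  · intro h a b
    have h2 := congrFun (congrFun (funMap_inj _ _ h) (b ∘ τ)) a
    rw [hL, hR] at h2
    have h3 : c (a ∘ τ) (b ∘ τ) = c a ((b ∘ τ) ∘ τ) := neg_injective h2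
    rwa [hinv] at h3
  · intro h
    apply congrArg (funMap K _ _)
    funext u b
    rw [hL, hR]
    have h2 := h b (u ∘ τ)
    rw [hinv] at h2
    rw [h2]

/-- the matrix of `eOp` at two general positions. -/
def eMat (K : Type) [Field K] (m n : ℕ) (p q : Fin n) :
    (Fin n → Fin (2*m)) → (Fin n → Fin (2*m)) → K := fun a b =>
  (if ∀ r : Fin n, r ≠ p → r ≠ q → b r = a r then (1:K) else 0) *
    (-((epsZ m (a p) (a q) : ℤ) : K)) * ((epsZ m (b p) (b q) : ℤ) : K)

lemma eMat_comm_iff (c : (Fin n → Fin (2*m)) → (Fin n → Fin (2*m)) → K)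
    (p q : Fin n) (hpq : p ≠ q) :
    (funMap K _ _ (fun u a => c a u) * funMap K _ _ (eMat K m n p q)
      = funMap K _ _ (eMat K m n p q) * funMap K _ _ (fun u a => c a u))
    ↔ ∀ u b : Fin n → Fin (2*m),
        ((epsZ m (b p) (b q) : ℤ) : K) *
          (∑ x, ((epsZ m x (conjIdx m x) : ℤ) : K) * c (set2 m n p q x (conjIdx m x) b) u)
        = ((epsZ m (u p) (u q) : ℤ) : K) *
          (∑ x, ((epsZ m x (conjIdx m x) : ℤ) : K) * c b (set2 m n p q x (conjIdx m x) u)) := by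
  rw [funMap_mul, funMap_mul]
  have hL : ∀ u b : Fin n → Fin (2*m),
      (∑ a, c a u * eMat K m n p q a b)
        = -(((epsZ m (b p) (b q) : ℤ) : K) *
            (∑ x, ((epsZ m x (conjIdx m x) : ℤ) : K) * c (set2 m n p q x (conjIdx m x) b) u)) := by
    intro u b
    have step : ∀ a : Fin n → Fin (2*m),
        c a u * eMat K m n p q a b
          = (if (∀ r : Fin n, r ≠ p → r ≠ q → a r = b r) then
              (c a u * (-((epsZ m (a p) (a q) : ℤ) : K)) * ((epsZ m (b p) (b q) : ℤ) : K))
             else 0) := by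
      intro a
      unfold eMat
      by_cases hc : ∀ r : Fin n, r ≠ p → r ≠ q → a r = b r
      · rw [if_pos hc, if_pos (fun r h1 h2 => (hc r h1 h2).symm)]; ring
      · rw [if_neg hc, if_neg (fun hh : ∀ r : Fin n, r ≠ p → r ≠ q → b r = a r =>
          hc (fun r h1 h2 => (hh r h1 h2).symm))]
        ring
    refine Eq.trans (Finset.sum_congr rfl (fun a _ => step a)) ?_
    refine Eq.trans (sum_agree (K := K) hpq b _ (fun a => Iff.rfl)
      (fun a => c a u * (-((epsZ m (a p) (a q) : ℤ) : K)) * ((epsZ m (b p) (b q) : ℤ) : K))) ?_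
    have inner : ∀ x : Fin (2*m),
        (∑ y, c (set2 m n p q x y b) u * (-((epsZ m ((set2 m n p q x y b) p)
            ((set2 m n p q x y b) q) : ℤ) : K)) * ((epsZ m (b p) (b q) : ℤ) : K))
        = ((epsZ m x (conjIdx m x) : ℤ) : K) *
            (- (c (set2 m n p q x (conjIdx m x) b) u) * ((epsZ m (b p) (b q) : ℤ) : K)) := by
      intro x
      rw [← sum_eps x (fun y => - (c (set2 m n p q x y b) u) * ((epsZ m (b p) (b q) : ℤ) : K))]
      refine Finset.sum_congr rfl (fun y _ => ?_)
      rw [set2_fst, set2_snd hpq]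
      ring
    rw [Finset.sum_congr rfl (fun x _ => inner x)]
    rw [Finset.mul_sum, ← Finset.sum_neg_distrib]
    exact Finset.sum_congr rfl (fun x _ => by ring)
  have hR : ∀ u b : Fin n → Fin (2*m),
      (∑ a, eMat K m n p q u a * c b a)
        = -(((epsZ m (u p) (u q) : ℤ) : K) *
            (∑ x, ((epsZ m x (conjIdx m x) : ℤ) : K) * c b (set2 m n p q x (conjIdx m x) u))) := by
    intro u b
    have step : ∀ a : Fin n → Fin (2*m),
        eMat K m n p q u a * c b a
          = (if (∀ r : Fin n, r ≠ p → r ≠ q → a r = u r) then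
              ((-((epsZ m (u p) (u q) : ℤ) : K)) * ((epsZ m (a p) (a q) : ℤ) : K) * c b a)
             else 0) := by
      intro a
      unfold eMat
      by_cases hc : ∀ r : Fin n, r ≠ p → r ≠ q → a r = u r
      · rw [if_pos hc, if_pos hc]; ring
      · rw [if_neg hc, if_neg hc]; ring
    refine Eq.trans (Finset.sum_congr rfl (fun a _ => step a)) ?_
    refine Eq.trans (sum_agree (K := K) hpq u _ (fun a => Iff.rfl)
      (fun a => (-((epsZ m (u p) (u q) : ℤ) : K)) * ((epsZ m (a p) (a q) : ℤ) : K) * c b a)) ?_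
    have inner : ∀ x : Fin (2*m),
        (∑ y, (-((epsZ m (u p) (u q) : ℤ) : K)) * ((epsZ m ((set2 m n p q x y u) p)
            ((set2 m n p q x y u) q) : ℤ) : K) * c b (set2 m n p q x y u))
        = ((epsZ m x (conjIdx m x) : ℤ) : K) *
            ((-((epsZ m (u p) (u q) : ℤ) : K)) * c b (set2 m n p q x (conjIdx m x) u)) := by
      intro x
      rw [← sum_eps x (fun y => (-((epsZ m (u p) (u q) : ℤ) : K)) * c b (set2 m n p q x y u))]
      refine Finset.sum_congr rfl (fun y _ => ?_)
      rw [set2_fst, set2_snd hpq]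
      ring
    rw [Finset.sum_congr rfl (fun x _ => inner x)]
    rw [Finset.mul_sum, ← Finset.sum_neg_distrib]
    exact Finset.sum_congr rfl (fun x _ => by ring)
  constructor
  · intro h u b
    have h2 := congrFun (congrFun (funMap_inj _ _ h) u) b
    rw [hL, hR] at h2
    exact neg_injective h2
  · intro h
    apply congrArg (funMap K _ _)
    funext u b
    rw [hL, hR, h u b]

end CommIff

section Star

variable {K : Type} [Field K] {m n : ℕ}

lemma star0 (p q : Fin n) (hpq : p ≠ q)
    (c : (Fin n → Fin (2*m)) → (Fin n → Fin (2*m)) → K)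
    (hσ : ∀ (σ : Equiv.Perm (Fin n)) (a b : Fin n → Fin (2*m)), c (a ∘ σ) (b ∘ σ) = c a b)
    (hA : ∀ (u t : Fin n → Fin (2*m)), u p ≠ conjIdx m (u q) →
      ∑ k : Fin (2*m), ((epsZ m k (conjIdx m k) : ℤ) : K) *
        c u (set2 m n p q k (conjIdx m k) t) = 0)
    (hB : ∀ (t w : Fin n → Fin (2*m)), w p ≠ conjIdx m (w q) →
      ∑ k : Fin (2*m), ((epsZ m k (conjIdx m k) : ℤ) : K) *
        c (set2 m n p q k (conjIdx m k) t) w = 0)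
    (hC : ∀ (i j : Fin (2*m)), (i:ℕ) < m → (j:ℕ) < m →
      ∀ (t w : Fin n → Fin (2*m)),
      ∑ k : Fin (2*m), ((epsZ m k (conjIdx m k) : ℤ) : K) *
        (c (set2 m n p q i (conjIdx m i) t) (set2 m n p q k (conjIdx m k) w) -
         c (set2 m n p q k (conjIdx m k) t) (set2 m n p q j (conjIdx m j) w)) = 0)
    (u b : Fin n → Fin (2*m)) :
    ((epsZ m (b p) (b q) : ℤ) : K) *
      (∑ x, ((epsZ m x (conjIdx m x) : ℤ) : K) * c (set2 m n p q x (conjIdx m x) b) u)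
    = ((epsZ m (u p) (u q) : ℤ) : K) *
      (∑ x, ((epsZ m x (conjIdx m x) : ℤ) : K) * c b (set2 m n p q x (conjIdx m x) u)) := by
  set τ := Equiv.swap p q with hτdef
  have hC' : ∀ (i j : Fin (2*m)), (i:ℕ) < m → (j:ℕ) < m → ∀ t w,
      (∑ k : Fin (2*m), ((epsZ m k (conjIdx m k) : ℤ) : K) *
          c (set2 m n p q i (conjIdx m i) t) (set2 m n p q k (conjIdx m k) w))
      = ∑ k : Fin (2*m), ((epsZ m k (conjIdx m k) : ℤ) : K) *
          c (set2 m n p q k (conjIdx m k) t) (set2 m n p q j (conjIdx m j) w) := by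
    intro i j hi hj t w
    have h0 := hC i j hi hj t w
    have h2 : (∑ k : Fin (2*m), ((epsZ m k (conjIdx m k) : ℤ) : K) *
          c (set2 m n p q i (conjIdx m i) t) (set2 m n p q k (conjIdx m k) w))
        - (∑ k : Fin (2*m), ((epsZ m k (conjIdx m k) : ℤ) : K) *
          c (set2 m n p q k (conjIdx m k) t) (set2 m n p q j (conjIdx m j) w)) = 0 := by
      rw [← Finset.sum_sub_distrib, ← h0]
      exact Finset.sum_congr rfl (fun k _ => by ring)
    exact sub_eq_zero.mp h2
  have hLτ : ∀ t w : Fin n → Fin (2*m),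
      (∑ x, ((epsZ m x (conjIdx m x) : ℤ) : K) * c (set2 m n p q x (conjIdx m x) t) (w ∘ τ))
      = - ∑ x, ((epsZ m x (conjIdx m x) : ℤ) : K) * c (set2 m n p q x (conjIdx m x) t) w := by
    intro t w
    have step : ∀ x : Fin (2*m),
        c (set2 m n p q x (conjIdx m x) t) (w ∘ τ)
          = c (set2 m n p q (conjIdx m x) (conjIdx m (conjIdx m x)) t) w := by
      intro x
      rw [← hσ τ (set2 m n p q (conjIdx m x) (conjIdx m (conjIdx m x)) t) w,
        comp_swap hpq, conj_conj]
    rw [Finset.sum_congr rfl (fun x _ => by rw [step x])]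
    rw [← Finset.sum_neg_distrib]
    refine Fintype.sum_equiv (conjEquiv m) _ _ (fun x => ?_)
    show ((epsZ m x (conjIdx m x) : ℤ) : K) *
        c (set2 m n p q (conjIdx m x) (conjIdx m (conjIdx m x)) t) w
      = -(((epsZ m (conjIdx m x) (conjIdx m (conjIdx m x)) : ℤ) : K) *
        c (set2 m n p q (conjIdx m x) (conjIdx m (conjIdx m x)) t) w)
    rw [epsZ_conj_conj]
    push_cast
    ring
  have hRτ : ∀ t w : Fin n → Fin (2*m),
      (∑ x, ((epsZ m x (conjIdx m x) : ℤ) : K) * c (t ∘ τ) (set2 m n p q x (conjIdx m x) w))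
      = - ∑ x, ((epsZ m x (conjIdx m x) : ℤ) : K) * c t (set2 m n p q x (conjIdx m x) w) := by
    intro t w
    have step : ∀ x : Fin (2*m),
        c (t ∘ τ) (set2 m n p q x (conjIdx m x) w)
          = c t (set2 m n p q (conjIdx m x) (conjIdx m (conjIdx m x)) w) := by
      intro x
      rw [← hσ τ t (set2 m n p q (conjIdx m x) (conjIdx m (conjIdx m x)) w),
        comp_swap hpq, conj_conj]
    rw [Finset.sum_congr rfl (fun x _ => by rw [step x])]
    rw [← Finset.sum_neg_distrib]
    refine Fintype.sum_equiv (conjEquiv m) _ _ (fun x => ?_)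
    show ((epsZ m x (conjIdx m x) : ℤ) : K) *
        c t (set2 m n p q (conjIdx m x) (conjIdx m (conjIdx m x)) w)
      = -(((epsZ m (conjIdx m x) (conjIdx m (conjIdx m x)) : ℤ) : K) *
        c t (set2 m n p q (conjIdx m x) (conjIdx m (conjIdx m x)) w))
    rw [epsZ_conj_conj]
    push_cast
    ring
  by_cases hb : b q = conjIdx m (b p)
  · by_cases hu : u q = conjIdx m (u p)
    · -- both nondegenerate
      have hbself : set2 m n p q (b p) (conjIdx m (b p)) b = b := by
        conv_lhs => rw [← hb]
        exact set2_self b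
      have huself : set2 m n p q (u p) (conjIdx m (u p)) u = u := by
        conv_lhs => rw [← hu]
        exact set2_self u
      have hbswap : b ∘ τ = set2 m n p q (conjIdx m (b p)) (conjIdx m (conjIdx m (b p))) b := by
        funext r
        by_cases h1 : r = p
        · subst h1
          rw [Function.comp_apply, hτdef, Equiv.swap_apply_left, set2_fst]
          exact hb
        · by_cases h2 : r = q
          · subst h2
            rw [Function.comp_apply, hτdef, Equiv.swap_apply_right, set2_snd hpq, conj_conj]
          · rw [Function.comp_apply, hτdef, Equiv.swap_apply_of_ne_of_ne h1 h2,
              set2_other _ _ _ h1 h2]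
      have huswap : u ∘ τ = set2 m n p q (conjIdx m (u p)) (conjIdx m (conjIdx m (u p))) u := by
        funext r
        by_cases h1 : r = p
        · subst h1
          rw [Function.comp_apply, hτdef, Equiv.swap_apply_left, set2_fst]
          exact hu
        · by_cases h2 : r = q
          · subst h2
            rw [Function.comp_apply, hτdef, Equiv.swap_apply_right, set2_snd hpq, conj_conj]
          · rw [Function.comp_apply, hτdef, Equiv.swap_apply_of_ne_of_ne h1 h2,
              set2_other _ _ _ h1 h2]
      rw [hb, hu, epsZ_conj, epsZ_conj]
      by_cases hbm : ((b p : Fin (2*m)) : ℕ) < m <;> by_cases hum : ((u p : Fin (2*m)) : ℕ) < m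
      · rw [if_pos hbm, if_pos hum]
        have h1 := hC' (b p) (u p) hbm hum b u
        rw [hbself, huself] at h1
        rw [h1]
      · rw [if_pos hbm, if_neg hum]
        have hj0 : ((conjIdx m (u p) : Fin (2*m)) : ℕ) < m := conj_lt_of_not_lt _ hum
        have h1 := hC' (b p) (conjIdx m (u p)) hbm hj0 b u
        rw [hbself, ← huswap, hLτ b u] at h1
        rw [h1]
        push_cast
        ring
      · rw [if_neg hbm, if_pos hum]
        have hi0 : ((conjIdx m (b p) : Fin (2*m)) : ℕ) < m := conj_lt_of_not_lt _ hbm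
        have h1 := hC' (conjIdx m (b p)) (u p) hi0 hum b u
        rw [← hbswap, huself, hRτ b u] at h1
        rw [← h1]
        push_cast
        ring
      · rw [if_neg hbm, if_neg hum]
        have hi0 : ((conjIdx m (b p) : Fin (2*m)) : ℕ) < m := conj_lt_of_not_lt _ hbm
        have hj0 : ((conjIdx m (u p) : Fin (2*m)) : ℕ) < m := conj_lt_of_not_lt _ hum
        have h1 := hC' (conjIdx m (b p)) (conjIdx m (u p)) hi0 hj0 b u
        rw [← hbswap, ← huswap, hRτ b u, hLτ b u] at h1
        have h2 := neg_injective h1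
        rw [h2]
    · rw [epsZ_eq_zero_of_ne (u p) (u q) hu, hB b u (ne_conj_symm hu)]
      simp
  · rw [epsZ_eq_zero_of_ne (b p) (b q) hb]
    by_cases hu : u q = conjIdx m (u p)
    · rw [hA b u (ne_conj_symm hb)]
      simp
    · rw [epsZ_eq_zero_of_ne (u p) (u q) hu]
      simp

end Star


lemma exists_perm_pair {α : Type} [DecidableEq α] (a b x y : α) (hab : a ≠ b) (hxy : x ≠ y) :
    ∃ σ : Equiv.Perm α, σ a = x ∧ σ b = y := by
  refine ⟨(Equiv.swap a x).trans (Equiv.swap ((Equiv.swap a x) b) y), ?_, ?_⟩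
  · rw [Equiv.trans_apply, Equiv.swap_apply_left]
    apply Equiv.swap_apply_of_ne_of_ne
    · intro hc
      exact hab ((Equiv.swap a x).injective ((Equiv.swap_apply_left a x).trans hc))
    · exact hxy
  · rw [Equiv.trans_apply, Equiv.swap_apply_left]


/-- For any field `K`, the subalgebra `S_K^s(m,n)` of the Schur algebra
`S_K(2m,n)` (realized inside `End_K(V^{⊗n})`; its elements are the operators with
place-permutation-invariant coefficient matrix `c` satisfying the three linear
conditions (2.4)) is exactly `End_{B_n(-2m)}(V^{⊗n})`, the centralizer of the right
action of the Brauer algebra. -/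
theorem symplectic_schur_algebra_eq_brauer_centralizer
    (K : Type) [Field K] (m n : ℕ) (hm : 0 < m) (hn : 0 < n) :
    {F : Module.End K (Ten K m n) |
      ∃ c : (Fin n → Fin (2*m)) → (Fin n → Fin (2*m)) → K,
        (∀ (σ : Equiv.Perm (Fin n)) a b, c (a ∘ σ) (b ∘ σ) = c a b) ∧
        (∀ (u t : Fin n → Fin (2*m)) (p q : Fin n), (p:ℕ) = 0 → (q:ℕ) = 1 →
          u p ≠ conjIdx m (u q) →
          ∑ k : Fin (2*m), ((epsZ m k (conjIdx m k) : ℤ) : K) *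
            c u (set2 m n p q k (conjIdx m k) t) = 0) ∧
        (∀ (t w : Fin n → Fin (2*m)) (p q : Fin n), (p:ℕ) = 0 → (q:ℕ) = 1 →
          w p ≠ conjIdx m (w q) →
          ∑ k : Fin (2*m), ((epsZ m k (conjIdx m k) : ℤ) : K) *
            c (set2 m n p q k (conjIdx m k) t) w = 0) ∧
        (∀ (i j : Fin (2*m)), (i:ℕ) < m → (j:ℕ) < m →
          ∀ (t w : Fin n → Fin (2*m)) (p q : Fin n), (p:ℕ) = 0 → (q:ℕ) = 1 →
          ∑ k : Fin (2*m), ((epsZ m k (conjIdx m k) : ℤ) : K) *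
            (c (set2 m n p q i (conjIdx m i) t) (set2 m n p q k (conjIdx m k) w) -
             c (set2 m n p q k (conjIdx m k) t) (set2 m n p q j (conjIdx m j) w)) = 0) ∧
        F = funMap K _ _ (fun u a => c a u)} =
    {F : Module.End K (Ten K m n) | ∀ j : Fin (n-1),
      F * sOp K m n j = sOp K m n j * F ∧ F * eOp K m n j = eOp K m n j * F} := by
  obtain ⟨n', rfl⟩ : ∃ n', n = n' + 1 := ⟨n - 1, by omega⟩
  apply Set.ext
  intro F
  simp only [Set.mem_setOf_eq]
  constructor
  · rintro ⟨c, hσ, hA, hB, hC, rfl⟩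
    intro j
    have hjlt : (j : ℕ) < n' + 1 - 1 := j.isLt
    have hl1 : (j:ℕ) < n'+1 := by omega
    have hl2 : (j:ℕ)+1 < n'+1 := by omega
    have h00 : (0:ℕ) < n'+1 := by omega
    have h11 : (1:ℕ) < n'+1 := by omega
    refine ⟨(sMat_comm_iff c ⟨(j:ℕ), hl1⟩ ⟨(j:ℕ)+1, hl2⟩).mpr (fun a b => hσ _ a b), ?_⟩
    have hjlh : (⟨(j:ℕ), hl1⟩ : Fin (n'+1)) ≠ ⟨(j:ℕ)+1, hl2⟩ :=
      Fin.ne_of_val_ne (show (j:ℕ) ≠ (j:ℕ)+1 by omega)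
    refine (eMat_comm_iff c ⟨(j:ℕ), hl1⟩ ⟨(j:ℕ)+1, hl2⟩ hjlh).mpr ?_
    intro u b
    have hp0q0 : (⟨0, h00⟩ : Fin (n'+1)) ≠ ⟨1, h11⟩ :=
      Fin.ne_of_val_ne (show (0:ℕ) ≠ 1 by omega)
    obtain ⟨σ, hσp, hσq⟩ := exists_perm_pair (⟨0, h00⟩ : Fin (n'+1)) ⟨1, h11⟩
      ⟨(j:ℕ), hl1⟩ ⟨(j:ℕ)+1, hl2⟩ hp0q0 hjlh
    have e1 : ∀ x : Fin (2*m),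
        c (set2 m (n'+1) ⟨(j:ℕ), hl1⟩ ⟨(j:ℕ)+1, hl2⟩ x (conjIdx m x) b) u
          = c (set2 m (n'+1) ⟨0, h00⟩ ⟨1, h11⟩ x (conjIdx m x) (b ∘ σ)) (u ∘ σ) := by
      intro x
      rw [← hσ σ (set2 m (n'+1) ⟨(j:ℕ), hl1⟩ ⟨(j:ℕ)+1, hl2⟩ x (conjIdx m x) b) u,
        comp_set2 σ hσp hσq]
    have e2 : ∀ x : Fin (2*m),
        c b (set2 m (n'+1) ⟨(j:ℕ), hl1⟩ ⟨(j:ℕ)+1, hl2⟩ x (conjIdx m x) u)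
          = c (b ∘ σ) (set2 m (n'+1) ⟨0, h00⟩ ⟨1, h11⟩ x (conjIdx m x) (u ∘ σ)) := by
      intro x
      rw [← hσ σ b (set2 m (n'+1) ⟨(j:ℕ), hl1⟩ ⟨(j:ℕ)+1, hl2⟩ x (conjIdx m x) u),
        comp_set2 σ hσp hσq]
    have hbp : b ⟨(j:ℕ), hl1⟩ = (b ∘ σ) ⟨0, h00⟩ := by rw [Function.comp_apply, hσp]
    have hbq : b ⟨(j:ℕ)+1, hl2⟩ = (b ∘ σ) ⟨1, h11⟩ := by rw [Function.comp_apply, hσq]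
    have hup : u ⟨(j:ℕ), hl1⟩ = (u ∘ σ) ⟨0, h00⟩ := by rw [Function.comp_apply, hσp]
    have huq : u ⟨(j:ℕ)+1, hl2⟩ = (u ∘ σ) ⟨1, h11⟩ := by rw [Function.comp_apply, hσq]
    have hsum1 : (∑ x : Fin (2*m), ((epsZ m x (conjIdx m x) : ℤ) : K) *
          c (set2 m (n'+1) ⟨(j:ℕ), hl1⟩ ⟨(j:ℕ)+1, hl2⟩ x (conjIdx m x) b) u)
        = ∑ x : Fin (2*m), ((epsZ m x (conjIdx m x) : ℤ) : K) *
          c (set2 m (n'+1) ⟨0, h00⟩ ⟨1, h11⟩ x (conjIdx m x) (b ∘ σ)) (u ∘ σ) :=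
      Finset.sum_congr rfl (fun x _ => by rw [e1 x])
    have hsum2 : (∑ x : Fin (2*m), ((epsZ m x (conjIdx m x) : ℤ) : K) *
          c b (set2 m (n'+1) ⟨(j:ℕ), hl1⟩ ⟨(j:ℕ)+1, hl2⟩ x (conjIdx m x) u))
        = ∑ x : Fin (2*m), ((epsZ m x (conjIdx m x) : ℤ) : K) *
          c (b ∘ σ) (set2 m (n'+1) ⟨0, h00⟩ ⟨1, h11⟩ x (conjIdx m x) (u ∘ σ)) :=
      Finset.sum_congr rfl (fun x _ => by rw [e2 x])
    rw [hsum1, hsum2, hbp, hbq, hup, huq]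
    exact star0 (⟨0, h00⟩ : Fin (n'+1)) ⟨1, h11⟩ hp0q0 c hσ
      (fun u t hne => hA u t ⟨0, h00⟩ ⟨1, h11⟩ rfl rfl hne)
      (fun t w hne => hB t w ⟨0, h00⟩ ⟨1, h11⟩ rfl rfl hne)
      (fun i j' hi hj t w => hC i j' hi hj t w ⟨0, h00⟩ ⟨1, h11⟩ rfl rfl)
      (u ∘ σ) (b ∘ σ)
  · intro h
    set c : (Fin (n'+1) → Fin (2*m)) → (Fin (n'+1) → Fin (2*m)) → K :=
      fun a v => F (dta K m (n'+1) a) v with hcdef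
    have hFeq : F = funMap K _ _ (fun v a => c a v) := end_eq_funMap F
    have hσall : ∀ (σ : Equiv.Perm (Fin (n'+1))) (a b : Fin (n'+1) → Fin (2*m)),
        c (a ∘ σ) (b ∘ σ) = c a b := by
      intro σ
      have hadj : ∀ i : Fin n', ∀ a b : Fin (n'+1) → Fin (2*m),
          c (a ∘ (Equiv.swap i.castSucc i.succ)) (b ∘ (Equiv.swap i.castSucc i.succ))
            = c a b := by
        intro i
        have hcomm := (h i).1
        rw [hFeq] at hcomm
        exact (sMat_comm_iff c i.castSucc i.succ).mp hcomm
      have hmem : σ ∈ Submonoid.closure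
          (Set.range fun i : Fin n' => Equiv.swap i.castSucc i.succ) := by
        rw [Equiv.Perm.mclosure_swap_castSucc_succ]
        exact Submonoid.mem_top σ
      induction hmem using Submonoid.closure_induction with
      | mem x hx => obtain ⟨i, rfl⟩ := hx; exact hadj i
      | one => intro a b; simp
      | mul x y hx hy ihx ihy =>
        intro a b
        rw [Equiv.Perm.coe_mul, ← Function.comp_assoc, ← Function.comp_assoc]
        exact (ihy _ _).trans (ihx a b)
    refine ⟨c, hσall, ?_, ?_, ?_, hFeq⟩
    · -- hA
      intro u t p q hp hq hne
      have hq1 : (1:ℕ) < n'+1 := by have := q.isLt; omega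
      have h0l : (0:ℕ) < n'+1 := Nat.succ_pos n'
      have hj0 : (0:ℕ) < n'+1-1 := by omega
      obtain rfl : p = ⟨0, h0l⟩ := Fin.ext hp
      obtain rfl : q = ⟨1, hq1⟩ := Fin.ext hq
      have hpq : (⟨0, h0l⟩ : Fin (n'+1)) ≠ ⟨1, hq1⟩ :=
        Fin.ne_of_val_ne (show (0:ℕ) ≠ 1 by omega)
      have hcomm := (h ⟨0, hj0⟩).2
      rw [hFeq] at hcomm
      have hstar := (eMat_comm_iff c ⟨0, h0l⟩ ⟨1, hq1⟩ hpq).mp hcomm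
      have hm2 : (0:ℕ) < 2*m := by omega
      have hi0 : ((⟨0, hm2⟩ : Fin (2*m)) : ℕ) < m := hm
      have hs := hstar (set2 m (n'+1) ⟨0, h0l⟩ ⟨1, hq1⟩ ⟨0, hm2⟩
        (conjIdx m ⟨0, hm2⟩) t) u
      rw [epsZ_eq_zero_of_ne _ _ (ne_conj_symm hne), Int.cast_zero, zero_mul,
        set2_fst, set2_snd hpq, epsZ_conj, if_pos hi0, Int.cast_one, one_mul] at hs
      simp only [set2_set2] at hs
      exact hs.symm
    · -- hB
      intro t w p q hp hq hne
      have hq1 : (1:ℕ) < n'+1 := by have := q.isLt; omega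
      have h0l : (0:ℕ) < n'+1 := Nat.succ_pos n'
      have hj0 : (0:ℕ) < n'+1-1 := by omega
      obtain rfl : p = ⟨0, h0l⟩ := Fin.ext hp
      obtain rfl : q = ⟨1, hq1⟩ := Fin.ext hq
      have hpq : (⟨0, h0l⟩ : Fin (n'+1)) ≠ ⟨1, hq1⟩ :=
        Fin.ne_of_val_ne (show (0:ℕ) ≠ 1 by omega)
      have hcomm := (h ⟨0, hj0⟩).2
      rw [hFeq] at hcomm
      have hstar := (eMat_comm_iff c ⟨0, h0l⟩ ⟨1, hq1⟩ hpq).mp hcomm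
      have hm2 : (0:ℕ) < 2*m := by omega
      have hi0 : ((⟨0, hm2⟩ : Fin (2*m)) : ℕ) < m := hm
      have hs := hstar w (set2 m (n'+1) ⟨0, h0l⟩ ⟨1, hq1⟩ ⟨0, hm2⟩
        (conjIdx m ⟨0, hm2⟩) t)
      rw [epsZ_eq_zero_of_ne _ _ (ne_conj_symm hne), Int.cast_zero, zero_mul,
        set2_fst, set2_snd hpq, epsZ_conj, if_pos hi0, Int.cast_one, one_mul] at hs
      simp only [set2_set2] at hs
      exact hs
    · -- hC
      intro i j' hi hj t w p q hp hq
      have hq1 : (1:ℕ) < n'+1 := by have := q.isLt; omega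
      have h0l : (0:ℕ) < n'+1 := Nat.succ_pos n'
      have hj0 : (0:ℕ) < n'+1-1 := by omega
      obtain rfl : p = ⟨0, h0l⟩ := Fin.ext hp
      obtain rfl : q = ⟨1, hq1⟩ := Fin.ext hq
      have hpq : (⟨0, h0l⟩ : Fin (n'+1)) ≠ ⟨1, hq1⟩ :=
        Fin.ne_of_val_ne (show (0:ℕ) ≠ 1 by omega)
      have hcomm := (h ⟨0, hj0⟩).2
      rw [hFeq] at hcomm
      have hstar := (eMat_comm_iff c ⟨0, h0l⟩ ⟨1, hq1⟩ hpq).mp hcomm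
      have hs := hstar (set2 m (n'+1) ⟨0, h0l⟩ ⟨1, hq1⟩ j' (conjIdx m j') w)
        (set2 m (n'+1) ⟨0, h0l⟩ ⟨1, hq1⟩ i (conjIdx m i) t)
      rw [set2_fst, set2_snd hpq, epsZ_conj, if_pos hi, Int.cast_one, one_mul,
        set2_fst, set2_snd hpq, epsZ_conj, if_pos hj, Int.cast_one, one_mul] at hs
      simp only [set2_set2] at hs
      have hsub : (∑ k : Fin (2*m), ((epsZ m k (conjIdx m k) : ℤ) : K) *
            (c (set2 m (n'+1) ⟨0, h0l⟩ ⟨1, hq1⟩ i (conjIdx m i) t)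
              (set2 m (n'+1) ⟨0, h0l⟩ ⟨1, hq1⟩ k (conjIdx m k) w) -
             c (set2 m (n'+1) ⟨0, h0l⟩ ⟨1, hq1⟩ k (conjIdx m k) t)
              (set2 m (n'+1) ⟨0, h0l⟩ ⟨1, hq1⟩ j' (conjIdx m j') w)))
          = (∑ k : Fin (2*m), ((epsZ m k (conjIdx m k) : ℤ) : K) *
              c (set2 m (n'+1) ⟨0, h0l⟩ ⟨1, hq1⟩ i (conjIdx m i) t)
                (set2 m (n'+1) ⟨0, h0l⟩ ⟨1, hq1⟩ k (conjIdx m k) w))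
            - ∑ k : Fin (2*m), ((epsZ m k (conjIdx m k) : ℤ) : K) *
              c (set2 m (n'+1) ⟨0, h0l⟩ ⟨1, hq1⟩ k (conjIdx m k) t)
                (set2 m (n'+1) ⟨0, h0l⟩ ⟨1, hq1⟩ j' (conjIdx m j') w) := by
        rw [← Finset.sum_sub_distrib]
        exact Finset.sum_congr rfl fun k _ => mul_sub _ _ _
      rw [hsub, hs, sub_self]


end SpBrauer
end
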